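/- Let m ≥ 1, let L : ℝ^m × ℝ^m → ℝ, (q,v) ↦ L(q,v), be continuously differentiable, and let q, v, p : [t₀,t₁] → ℝ^m be C¹ curves. For C¹ variations δq, δv, δp : [t₀,t₁] → ℝ^m with δq(t₀) = δq(t₁) = 0, define the first variation δS := ∫_{t₀}^{t₁} [ (∂L/∂q)(q(t),v(t))·δq(t) + (∂L/∂v)(q(t),v(t))·δv(t) + δp(t)·(q̇(t) − v(t)) + p(t)·(δq̇(t) − δv(t)) ] dt. Then δS = 0 for all such variations if and only if on [t₀,t₁]: q̇ = v, p = (∂L/∂v)(q,v), and ṗ = (∂L/∂q)(q,v). -/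

import Mathlib

open MeasureTheory intervalIntegral

/-!
STATEMENT 9: the Hamilton–Pontryagin variational principle of mechanics.  For C¹ curves
`q, v, p : [t₀,t₁] → ℝ^m` and a C¹ Lagrangian `L(q,v)`, the first variation `δS` vanishes
for all C¹ variations `(δq, δv, δp)` with `δq(t₀) = δq(t₁) = 0` if and only if on `[t₀,t₁]`:
`q̇ = v`, `p = ∂L/∂v (q,v)`, and `ṗ = ∂L/∂q (q,v)`.  Derivatives of curves are taken within
`[t₀,t₁]` (`derivWithin`), and the partial derivatives of `L` are expressed via its Fréchet
derivative applied to the corresponding directions. -/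

/-- Fundamental lemma of the calculus of variations on an interval. -/
lemma fund_lemma {t₀ t₁ : ℝ} (ht : t₀ < t₁) {f : ℝ → ℝ}
    (hf : ContinuousOn f (Set.Icc t₀ t₁))
    (h : ∀ g : ℝ → ℝ, ContDiff ℝ ((⊤:ℕ∞):WithTop ℕ∞) g → HasCompactSupport g → tsupport g ⊆ Set.Ioo t₀ t₁ →
      (∫ t in t₀..t₁, g t * f t) = 0) :
    ∀ t ∈ Set.Icc t₀ t₁, f t = 0 := by
  have hU : IsOpen (Set.Ioo t₀ t₁) := isOpen_Ioo
  have hloc : LocallyIntegrableOn f (Set.Ioo t₀ t₁) volume :=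
    (hf.mono Set.Ioo_subset_Icc_self).locallyIntegrableOn measurableSet_Ioo
  have hae : ∀ᵐ x ∂(volume : Measure ℝ), x ∈ Set.Ioo t₀ t₁ → f x = 0 := by
    refine hU.ae_eq_zero_of_integral_contDiff_smul_eq_zero hloc ?_
    intro g hg hgc hgs
    have h0 : ∀ x ∉ Set.Ioc t₀ t₁, g x • f x = 0 := by
      intro x hx
      have : x ∉ tsupport g := fun hx' => hx (Set.Ioo_subset_Ioc_self (hgs hx'))
      simp [image_eq_zero_of_notMem_tsupport this]
    rw [← MeasureTheory.setIntegral_eq_integral_of_forall_compl_eq_zero h0]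
    have := h g hg hgc hgs
    rwa [intervalIntegral.integral_of_le ht.le] at this
    -- integrand smul = mul
  have heq : Set.EqOn f 0 (Set.Ioo t₀ t₁) := by
    have h2 : ∀ᵐ x ∂(volume.restrict (Set.Ioo t₀ t₁)), f x = (0 : ℝ → ℝ) x :=
      (MeasureTheory.ae_restrict_iff' measurableSet_Ioo).2 hae
    exact MeasureTheory.Measure.eqOn_Ioo_of_ae_eq volume h2 (hf.mono Set.Ioo_subset_Icc_self)
      continuousOn_const
  have : Set.EqOn f 0 (Set.Icc t₀ t₁) :=
    heq.of_subset_closure hf continuousOn_const Set.Ioo_subset_Icc_self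
      (closure_Ioo ht.ne).symm.subset
  exact fun t htI => this htI

/-- FTC for `derivWithin` on a closed interval. -/
lemma ftc_icc {t₀ t₁ : ℝ} (ht : t₀ < t₁) {g : ℝ → ℝ}
    (hg : ContDiffOn ℝ 1 g (Set.Icc t₀ t₁)) :
    (∫ t in t₀..t₁, derivWithin g (Set.Icc t₀ t₁) t) = g t₁ - g t₀ := by
  apply intervalIntegral.integral_eq_sub_of_hasDeriv_right_of_le ht.le hg.continuousOn
  · intro x hx
    have hx' : Set.Icc t₀ t₁ ∈ nhds x := Icc_mem_nhds hx.1 hx.2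
    have hd : DifferentiableWithinAt ℝ g (Set.Icc t₀ t₁) x :=
      hg.differentiableOn one_ne_zero x (Set.Ioo_subset_Icc_self hx)
    exact ((hd.hasDerivWithinAt).hasDerivAt hx').hasDerivWithinAt
  · apply ContinuousOn.intervalIntegrable
    rw [Set.uIcc_of_le ht.le]
    exact hg.continuousOn_derivWithin (uniqueDiffOn_Icc ht) le_rfl
open MeasureTheory intervalIntegral

lemma derivWithin_pi_apply {n : ℕ} {F : ℝ → (Fin n → ℝ)} {s : Set ℝ} {t : ℝ}
    (hF : DifferentiableWithinAt ℝ F s t) (hu : UniqueDiffWithinAt ℝ s t) (i : Fin n) :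
    derivWithin (fun x => F x i) s t = derivWithin F s t i :=
  ((hasDerivWithinAt_pi.1 hF.hasDerivWithinAt) i).derivWithin hu

lemma clm_apply_left {n : ℕ} (T : ((Fin n → ℝ) × (Fin n → ℝ)) →L[ℝ] ℝ) (w : Fin n → ℝ) :
    T (w, 0) = ∑ i : Fin n, w i * T (Pi.single i 1, 0) := by
  have hw : ((w, 0) : (Fin n → ℝ) × (Fin n → ℝ))
      = ∑ i : Fin n, w i • ((Pi.single i 1 : Fin n → ℝ), (0 : Fin n → ℝ)) := by
    apply Prod.ext
    · rw [Prod.fst_sum]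
      funext j
      simp [Finset.sum_apply, Pi.single_apply]
    · rw [Prod.snd_sum]
      simp
  rw [hw, map_sum]
  refine Finset.sum_congr rfl fun i _ => ?_
  rw [T.map_smul, smul_eq_mul]

lemma clm_apply_right {n : ℕ} (T : ((Fin n → ℝ) × (Fin n → ℝ)) →L[ℝ] ℝ) (w : Fin n → ℝ) :
    T (0, w) = ∑ i : Fin n, w i * T (0, Pi.single i 1) := by
  have hw : ((0, w) : (Fin n → ℝ) × (Fin n → ℝ))
      = ∑ i : Fin n, w i • ((0 : Fin n → ℝ), (Pi.single i 1 : Fin n → ℝ)) := by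
    apply Prod.ext
    · rw [Prod.fst_sum]
      simp
    · rw [Prod.snd_sum]
      funext j
      simp [Finset.sum_apply, Pi.single_apply]
  rw [hw, map_sum]
  refine Finset.sum_congr rfl fun i _ => ?_
  rw [T.map_smul, smul_eq_mul]

theorem hamilton_pontryagin_mechanics
    (m : ℕ) (hm : 1 ≤ m) (t₀ t₁ : ℝ) (ht : t₀ < t₁)
    (L : (Fin m → ℝ) × (Fin m → ℝ) → ℝ) (hL : ContDiff ℝ 1 L)
    (q v p : ℝ → Fin m → ℝ)
    (hq : ContDiffOn ℝ 1 q (Set.Icc t₀ t₁)) (hv : ContDiffOn ℝ 1 v (Set.Icc t₀ t₁))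
    (hp : ContDiffOn ℝ 1 p (Set.Icc t₀ t₁)) :
    (∀ δq δv δp : ℝ → Fin m → ℝ,
      ContDiffOn ℝ 1 δq (Set.Icc t₀ t₁) → ContDiffOn ℝ 1 δv (Set.Icc t₀ t₁) →
      ContDiffOn ℝ 1 δp (Set.Icc t₀ t₁) → δq t₀ = 0 → δq t₁ = 0 →
      (∫ t in t₀..t₁,
        (fderiv ℝ L (q t, v t) (δq t, 0)
         + fderiv ℝ L (q t, v t) (0, δv t)
         + ∑ i : Fin m, δp t i * (derivWithin q (Set.Icc t₀ t₁) t i - v t i)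
         + ∑ i : Fin m, p t i * (derivWithin δq (Set.Icc t₀ t₁) t i - δv t i))) = 0)
    ↔ (∀ t ∈ Set.Icc t₀ t₁,
        derivWithin q (Set.Icc t₀ t₁) t = v t
        ∧ (∀ i : Fin m, p t i = fderiv ℝ L (q t, v t) (0, Pi.single i 1))
        ∧ (∀ i : Fin m, derivWithin p (Set.Icc t₀ t₁) t i
            = fderiv ℝ L (q t, v t) (Pi.single i 1, 0))) := by
  have hI : UniqueDiffOn ℝ (Set.Icc t₀ t₁) := uniqueDiffOn_Icc ht
  have hone : (1 : WithTop ℕ∞) ≤ ((⊤ : ℕ∞) : WithTop ℕ∞) := by exact_mod_cast le_top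
  have huIcc : Set.uIcc t₀ t₁ = Set.Icc t₀ t₁ := Set.uIcc_of_le ht.le
  have hqc : ContinuousOn q (Set.Icc t₀ t₁) := hq.continuousOn
  have hvc : ContinuousOn v (Set.Icc t₀ t₁) := hv.continuousOn
  have hpc : ContinuousOn p (Set.Icc t₀ t₁) := hp.continuousOn
  have hDq : ContinuousOn (derivWithin q (Set.Icc t₀ t₁)) (Set.Icc t₀ t₁) :=
    hq.continuousOn_derivWithin hI le_rfl
  have hDp : ContinuousOn (derivWithin p (Set.Icc t₀ t₁)) (Set.Icc t₀ t₁) :=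
    hp.continuousOn_derivWithin hI le_rfl
  have hPhi : ContinuousOn (fun t => fderiv ℝ L (q t, v t)) (Set.Icc t₀ t₁) :=
    (hL.continuous_fderiv one_ne_zero).comp_continuousOn (hqc.prodMk hvc)
  have hA : ∀ i : Fin m, ContinuousOn
      (fun t => fderiv ℝ L (q t, v t) ((Pi.single i 1 : Fin m → ℝ), 0)) (Set.Icc t₀ t₁) :=
    fun i => hPhi.clm_apply continuousOn_const
  have hB : ∀ i : Fin m, ContinuousOn
      (fun t => fderiv ℝ L (q t, v t) (0, (Pi.single i 1 : Fin m → ℝ))) (Set.Icc t₀ t₁) :=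
    fun i => hPhi.clm_apply continuousOn_const
  constructor
  · -- forward direction
    intro H
    -- Step 1 : q̇ = v
    have step1 : ∀ i : Fin m, ∀ t ∈ Set.Icc t₀ t₁,
        derivWithin q (Set.Icc t₀ t₁) t i - v t i = 0 := by
      intro i
      apply fund_lemma ht
      · exact ((continuous_apply i).comp_continuousOn hDq).sub
          ((continuous_apply i).comp_continuousOn hvc)
      · intro g hg hgc hgs
        have hH := H (fun _ => 0) (fun _ => 0) (fun s => g s • (Pi.single i 1 : Fin m → ℝ))
          contDiffOn_const contDiffOn_const
          ((hg.contDiffOn.smul contDiffOn_const).of_le hone) rfl rfl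
        rw [intervalIntegral.integral_congr
          (g := fun s => g s * (derivWithin q (Set.Icc t₀ t₁) s i - v s i)) ?_] at hH
        · exact hH
        · intro s hs
          rw [huIcc] at hs
          have h4 : derivWithin (fun _ : ℝ => (0 : Fin m → ℝ)) (Set.Icc t₀ t₁) s = 0 :=
            congrFun (derivWithin_const _ _) s
          have hsum : ∑ j : Fin m, (g s • (Pi.single i 1 : Fin m → ℝ)) j
              * (derivWithin q (Set.Icc t₀ t₁) s j - v s j)
              = g s * (derivWithin q (Set.Icc t₀ t₁) s i - v s i) := by
            rw [Finset.sum_eq_single i]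
            · simp
            · intro j _ hj; simp [Pi.single_apply, hj]
            · simp
          show fderiv ℝ L (q s, v s) ((0 : Fin m → ℝ), 0)
              + fderiv ℝ L (q s, v s) (0, (0 : Fin m → ℝ))
              + (∑ j : Fin m, (g s • (Pi.single i 1 : Fin m → ℝ)) j
                  * (derivWithin q (Set.Icc t₀ t₁) s j - v s j))
              + (∑ j : Fin m, p s j
                  * (derivWithin (fun _ : ℝ => (0 : Fin m → ℝ)) (Set.Icc t₀ t₁) s j
                     - (0 : Fin m → ℝ) j))
            = g s * (derivWithin q (Set.Icc t₀ t₁) s i - v s i)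
          rw [h4, hsum]
          simp [Prod.mk_zero_zero]
    -- Step 2 : p = ∂L/∂v
    have step2 : ∀ i : Fin m, ∀ t ∈ Set.Icc t₀ t₁,
        fderiv ℝ L (q t, v t) (0, (Pi.single i 1 : Fin m → ℝ)) - p t i = 0 := by
      intro i
      apply fund_lemma ht
      · exact (hB i).sub ((continuous_apply i).comp_continuousOn hpc)
      · intro g hg hgc hgs
        have hH := H (fun _ => 0) (fun s => g s • (Pi.single i 1 : Fin m → ℝ)) (fun _ => 0)
          contDiffOn_const ((hg.contDiffOn.smul contDiffOn_const).of_le hone)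
          contDiffOn_const rfl rfl
        rw [intervalIntegral.integral_congr
          (g := fun s => g s * (fderiv ℝ L (q s, v s) (0, (Pi.single i 1 : Fin m → ℝ)) - p s i))
          ?_] at hH
        · exact hH
        · intro s hs
          rw [huIcc] at hs
          have h4 : derivWithin (fun _ : ℝ => (0 : Fin m → ℝ)) (Set.Icc t₀ t₁) s = 0 :=
            congrFun (derivWithin_const _ _) s
          have hfd : fderiv ℝ L (q s, v s) ((0 : Fin m → ℝ), g s • (Pi.single i 1 : Fin m → ℝ))
              = g s * fderiv ℝ L (q s, v s) (0, (Pi.single i 1 : Fin m → ℝ)) := by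
            have h2 : ((0 : Fin m → ℝ), g s • (Pi.single i 1 : Fin m → ℝ))
                = g s • ((0 : Fin m → ℝ), (Pi.single i 1 : Fin m → ℝ)) := by
              simp [Prod.smul_mk]
            rw [h2, (fderiv ℝ L (q s, v s)).map_smul, smul_eq_mul]
          have hsum : ∑ j : Fin m, p s j
              * ((0 : Fin m → ℝ) j - (g s • (Pi.single i 1 : Fin m → ℝ)) j)
              = -(g s * p s i) := by
            rw [Finset.sum_eq_single i]
            · simp [mul_comm]
            · intro j _ hj; simp [Pi.single_apply, hj]
            · simp
          show fderiv ℝ L (q s, v s) ((0 : Fin m → ℝ), 0)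
              + fderiv ℝ L (q s, v s) ((0 : Fin m → ℝ), g s • (Pi.single i 1 : Fin m → ℝ))
              + (∑ j : Fin m, (0 : Fin m → ℝ) j
                  * (derivWithin q (Set.Icc t₀ t₁) s j - v s j))
              + (∑ j : Fin m, p s j
                  * (derivWithin (fun _ : ℝ => (0 : Fin m → ℝ)) (Set.Icc t₀ t₁) s j
                     - (g s • (Pi.single i 1 : Fin m → ℝ)) j))
            = g s * (fderiv ℝ L (q s, v s) (0, (Pi.single i 1 : Fin m → ℝ)) - p s i)
          rw [h4, hfd, hsum]
          simp [Prod.mk_zero_zero]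
          ring
    -- Step 3 : ṗ = ∂L/∂q
    have step3 : ∀ i : Fin m, ∀ t ∈ Set.Icc t₀ t₁,
        fderiv ℝ L (q t, v t) ((Pi.single i 1 : Fin m → ℝ), 0)
          - derivWithin p (Set.Icc t₀ t₁) t i = 0 := by
      intro i
      apply fund_lemma ht
      · exact (hA i).sub ((continuous_apply i).comp_continuousOn hDp)
      · intro g hg hgc hgs
        have hg0 : g t₀ = 0 := image_eq_zero_of_notMem_tsupport
          (fun hmem => lt_irrefl t₀ (hgs hmem).1)
        have hg1 : g t₁ = 0 := image_eq_zero_of_notMem_tsupport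
          (fun hmem => lt_irrefl t₁ (hgs hmem).2)
        have hH := H (fun s => g s • (Pi.single i 1 : Fin m → ℝ)) (fun _ => 0) (fun _ => 0)
          ((hg.contDiffOn.smul contDiffOn_const).of_le hone)
          contDiffOn_const contDiffOn_const
          (by show g t₀ • (Pi.single i 1 : Fin m → ℝ) = 0; rw [hg0, zero_smul])
          (by show g t₁ • (Pi.single i 1 : Fin m → ℝ) = 0; rw [hg1, zero_smul])
        -- rewrite hH into ∫ (g·A_i + p_i·g') = 0
        rw [intervalIntegral.integral_congr
          (g := fun s => g s * fderiv ℝ L (q s, v s) ((Pi.single i 1 : Fin m → ℝ), 0)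
            + p s i * deriv g s) ?_] at hH
        swap
        · intro s hs
          rw [huIcc] at hs
          have hfd : fderiv ℝ L (q s, v s) (g s • (Pi.single i 1 : Fin m → ℝ), (0 : Fin m → ℝ))
              = g s * fderiv ℝ L (q s, v s) ((Pi.single i 1 : Fin m → ℝ), 0) := by
            have h2 : (g s • (Pi.single i 1 : Fin m → ℝ), (0 : Fin m → ℝ))
                = g s • ((Pi.single i 1 : Fin m → ℝ), (0 : Fin m → ℝ)) := by
              simp [Prod.smul_mk]
            rw [h2, (fderiv ℝ L (q s, v s)).map_smul, smul_eq_mul]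
          have hdq : derivWithin (fun x => g x • (Pi.single i 1 : Fin m → ℝ))
              (Set.Icc t₀ t₁) s = deriv g s • (Pi.single i 1 : Fin m → ℝ) := by
            exact (((hg.differentiable (zero_lt_one.trans_le hone).ne').differentiableAt.hasDerivAt.hasDerivWithinAt
              ).smul_const _).derivWithin (hI s hs)
          have hsum : ∑ j : Fin m, p s j
              * ((deriv g s • (Pi.single i 1 : Fin m → ℝ)) j - (0 : Fin m → ℝ) j)
              = p s i * deriv g s := by
            rw [Finset.sum_eq_single i]
            · simp
            · intro j _ hj; simp [Pi.single_apply, hj]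
            · simp
          show fderiv ℝ L (q s, v s) (g s • (Pi.single i 1 : Fin m → ℝ), 0)
              + fderiv ℝ L (q s, v s) (0, (0 : Fin m → ℝ))
              + (∑ j : Fin m, (0 : Fin m → ℝ) j
                  * (derivWithin q (Set.Icc t₀ t₁) s j - v s j))
              + (∑ j : Fin m, p s j
                  * (derivWithin (fun x => g x • (Pi.single i 1 : Fin m → ℝ)) (Set.Icc t₀ t₁) s j
                     - (0 : Fin m → ℝ) j))
            = g s * fderiv ℝ L (q s, v s) ((Pi.single i 1 : Fin m → ℝ), 0) + p s i * deriv g s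
          rw [hfd, hdq, hsum]
          simp [Prod.mk_zero_zero]
        -- integration by parts via FTC
        have hpg : ContDiffOn ℝ 1 (fun s => p s i * g s) (Set.Icc t₀ t₁) :=
          (contDiffOn_pi.1 hp i).mul (hg.contDiffOn.of_le hone)
        have hftc := ftc_icc ht hpg
        rw [hg0, hg1, mul_zero, mul_zero, sub_zero] at hftc
        have hibp : (∫ s in t₀..t₁,
            (derivWithin p (Set.Icc t₀ t₁) s i * g s + p s i * deriv g s)) = 0 := by
          rw [← hftc]
          apply intervalIntegral.integral_congr
          intro s hs
          rw [huIcc] at hs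
          have hpi : DifferentiableWithinAt ℝ (fun x => p x i) (Set.Icc t₀ t₁) s :=
            (contDiffOn_pi.1 hp i).differentiableOn one_ne_zero s hs
          have hgi : DifferentiableWithinAt ℝ g (Set.Icc t₀ t₁) s :=
            (hg.differentiable (zero_lt_one.trans_le hone).ne').differentiableAt.differentiableWithinAt
          rw [derivWithin_fun_mul hpi hgi,
            derivWithin_pi_apply (hp.differentiableOn one_ne_zero s hs) (hI s hs) i,
            (hg.differentiable (zero_lt_one.trans_le hone).ne').differentiableAt.derivWithin (hI s hs)]
        -- subtract
        have hint1 : IntervalIntegrable (fun s => g s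
            * fderiv ℝ L (q s, v s) ((Pi.single i 1 : Fin m → ℝ), 0)
            + p s i * deriv g s) volume t₀ t₁ := by
          apply ContinuousOn.intervalIntegrable
          rw [huIcc]
          exact ((hg.continuous.continuousOn).mul (hA i)).add
            (((continuous_apply i).comp_continuousOn hpc).mul
              ((hg.continuous_deriv hone).continuousOn))
        have hint2 : IntervalIntegrable (fun s =>
            derivWithin p (Set.Icc t₀ t₁) s i * g s + p s i * deriv g s) volume t₀ t₁ := by
          apply ContinuousOn.intervalIntegrable
          rw [huIcc]
          exact (((continuous_apply i).comp_continuousOn hDp).mul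
              (hg.continuous.continuousOn)).add
            (((continuous_apply i).comp_continuousOn hpc).mul
              ((hg.continuous_deriv hone).continuousOn))
        have := intervalIntegral.integral_sub hint1 hint2
        rw [hH, hibp, sub_zero] at this
        rw [← this]
        apply intervalIntegral.integral_congr
        intro s hs
        ring
    intro t htI
    refine ⟨funext fun i => sub_eq_zero.mp (step1 i t htI), fun i => ?_, fun i => ?_⟩
    · exact (sub_eq_zero.mp (step2 i t htI)).symm
    · exact (sub_eq_zero.mp (step3 i t htI)).symm
  · -- backward direction
    intro hE δq δv δp hδq hδv hδp h0 h1
    set G : ℝ → ℝ := fun s => ∑ i : Fin m, p s i * δq s i with hGdef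
    have hG : ContDiffOn ℝ 1 G (Set.Icc t₀ t₁) :=
      ContDiffOn.sum fun i _ => (contDiffOn_pi.1 hp i).mul (contDiffOn_pi.1 hδq i)
    have hGd : ∀ s ∈ Set.Icc t₀ t₁, derivWithin G (Set.Icc t₀ t₁) s
        = ∑ i : Fin m, (derivWithin p (Set.Icc t₀ t₁) s i * δq s i
            + p s i * derivWithin δq (Set.Icc t₀ t₁) s i) := by
      intro s hs
      refine HasDerivWithinAt.derivWithin ?_ (hI s hs)
      apply HasDerivWithinAt.fun_sum
      intro i _
      have hpi : HasDerivWithinAt (fun x => p x i)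
          (derivWithin p (Set.Icc t₀ t₁) s i) (Set.Icc t₀ t₁) s :=
        hasDerivWithinAt_pi.1 ((hp.differentiableOn one_ne_zero s hs).hasDerivWithinAt) i
      have hqi : HasDerivWithinAt (fun x => δq x i)
          (derivWithin δq (Set.Icc t₀ t₁) s i) (Set.Icc t₀ t₁) s :=
        hasDerivWithinAt_pi.1 ((hδq.differentiableOn one_ne_zero s hs).hasDerivWithinAt) i
      exact hpi.mul hqi
    have key : (∫ t in t₀..t₁,
        (fderiv ℝ L (q t, v t) (δq t, 0)
         + fderiv ℝ L (q t, v t) (0, δv t)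
         + ∑ i : Fin m, δp t i * (derivWithin q (Set.Icc t₀ t₁) t i - v t i)
         + ∑ i : Fin m, p t i * (derivWithin δq (Set.Icc t₀ t₁) t i - δv t i)))
        = ∫ t in t₀..t₁, derivWithin G (Set.Icc t₀ t₁) t := by
      apply intervalIntegral.integral_congr
      intro s hs
      rw [huIcc] at hs
      obtain ⟨e1, e2, e3⟩ := hE s hs
      beta_reduce
      rw [hGd s hs, e1]
      rw [clm_apply_left, clm_apply_right]
      have hBsum : ∑ i : Fin m, δv s i * fderiv ℝ L (q s, v s) (0, Pi.single i 1)
          = ∑ i : Fin m, δv s i * p s i :=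
        Finset.sum_congr rfl fun i _ => by rw [← e2 i]
      have hAsum : ∑ i : Fin m, δq s i * fderiv ℝ L (q s, v s) (Pi.single i 1, 0)
          = ∑ i : Fin m, δq s i * derivWithin p (Set.Icc t₀ t₁) s i :=
        Finset.sum_congr rfl fun i _ => by rw [← e3 i]
      rw [hBsum, hAsum]
      simp only [sub_self, mul_zero, Finset.sum_const_zero, add_zero]
      rw [← Finset.sum_add_distrib, ← Finset.sum_add_distrib]
      apply Finset.sum_congr rfl
      intro i _
      ring
    rw [key, ftc_icc ht hG]
    simp [hGdef, h0, h1]
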